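/- For every n ≥ 1, substituting y = 0 in Q_n gives Q_n(x, 0, z, t) = ∏_{k=1}^{n−1} (x + k·z + k·t). -/

import Mathlib

open MvPolynomial

/-- The Chapoton polynomials `Q n`, defined by `Q 1 = 1` and
`Q (n+1) = [x + n z + (y + t)(n + y ∂_y)] Q n`, where the variables
`x, y, z, t` are `X 0, X 1, X 2, X 3` respectively. -/
noncomputable def ChapotonQ : ℕ → MvPolynomial (Fin 4) ℤ
  | 0 => 1
  | 1 => 1
  | (n + 2) =>
      (X 0 + ((n : MvPolynomial (Fin 4) ℤ) + 1) * X 2) * ChapotonQ (n + 1) +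
        (X 1 + X 3) * (((n : MvPolynomial (Fin 4) ℤ) + 1) * ChapotonQ (n + 1) +
          X 1 * pderiv 1 (ChapotonQ (n + 1)))

/-- Substituting `y = 0` gives `Q_n(x,0,z,t) = ∏_{k=1}^{n-1} (x + k z + k t)`. -/
theorem chapotonQ_y_eq_zero (n : ℕ) (hn : 1 ≤ n) :
    aeval ![X 0, 0, X 2, X 3] (ChapotonQ n) =
      ∏ k ∈ Finset.Icc 1 (n - 1),
        (X 0 + (k : MvPolynomial (Fin 4) ℤ) * X 2 + (k : MvPolynomial (Fin 4) ℤ) * X 3) := by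
  induction n with
  | zero => omega
  | succ m ih =>
    rcases Nat.eq_or_lt_of_le hn with h | h
    · simp [← h, ChapotonQ]
    · obtain ⟨k, rfl⟩ : ∃ k, m = k + 1 := ⟨m - 1, by omega⟩
      have ih' := ih (by omega)
      simp only [Nat.add_sub_cancel] at ih' ⊢
      rw [Finset.prod_Icc_succ_top (by omega), ← ih']
      show aeval ![X 0, 0, X 2, X 3] (ChapotonQ (k + 2)) = _
      rw [ChapotonQ]
      simp only [map_add, map_mul, map_natCast, map_one, aeval_X]
      norm_num [Matrix.cons_val_zero, Matrix.cons_val_one]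
      push_cast
      ring
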